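/- Translations are linearly represented by the translator versor T = 1 + ½ t e∞ in conformal geometric algebra: for all x, t ∈ ℝ³ (vectors of ℝ³ embedded in V as (·,0,0)), in the Clifford algebra Cl(4,1) one has (1 - ½ • (ι(t) * ι(e∞))) * ι(C(x)) * (1 + ½ • (ι(t) * ι(e∞))) = ι(C(x + t)). -/
import Mathlib


open scoped RealInnerProductSpace

/-- The vector space of the conformal model: `ℝ³ × ℝ × ℝ`,
with elements `(v, α, β)`. -/
abbrev ConfV : Type := (EuclideanSpace ℝ (Fin 3)) × ℝ × ℝ

/-- The companion bilinear form of the conformal quadratic form. -/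
noncomputable def confB : LinearMap.BilinForm ℝ ConfV :=
  LinearMap.mk₂ ℝ
    (fun x y => 2 * ⟪x.1, y.1⟫ - 2 * (x.2.1 * y.2.2 + x.2.2 * y.2.1))
    (fun x x' y => by
      simp only [Prod.fst_add, Prod.snd_add, inner_add_left]; ring)
    (fun a x y => by
      simp only [Prod.smul_fst, Prod.smul_snd, real_inner_smul_left, smul_eq_mul]; ring)
    (fun x y y' => by
      simp only [Prod.fst_add, Prod.snd_add, inner_add_right]; ring)
    (fun a x y => by
      simp only [Prod.smul_fst, Prod.smul_snd, real_inner_smul_right, smul_eq_mul]; ring)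

/-- The conformal quadratic form `Q (v, α, β) = ‖v‖² - 2αβ` of signature `(4,1)`. -/
noncomputable def Qc : QuadraticForm ℝ ConfV where
  toFun x := ‖x.1‖ ^ 2 - 2 * x.2.1 * x.2.2
  toFun_smul a x := by
    simp only [Prod.smul_fst, Prod.smul_snd, norm_smul, mul_pow, Real.norm_eq_abs, sq_abs,
      smul_eq_mul]
    ring
  exists_companion' :=
    ⟨confB, fun x y => by
      simp only [confB, LinearMap.mk₂_apply, Prod.fst_add, Prod.snd_add, norm_add_sq_real]
      ring⟩

/-- The null vector representing the origin. -/
noncomputable def e₀ : ConfV := (0, 1, 0)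

/-- The null vector representing infinity. -/
noncomputable def eInf : ConfV := (0, 0, 1)

/-- The symmetric bilinear form associated to `Qc`. -/
noncomputable def Bc (x y : ConfV) : ℝ := (Qc (x + y) - Qc x - Qc y) / 2

/-- The conformal embedding `C x = x + ½‖x‖² e∞ + e₀`. -/
noncomputable def confC (x : EuclideanSpace ℝ (Fin 3)) : ConfV := (x, 1, ‖x‖ ^ 2 / 2)

/-- The canonical embedding into the conformal geometric algebra `Cl(4,1)`. -/
noncomputable def ιc : ConfV →ₗ[ℝ] CliffordAlgebra Qc :=
  CliffordAlgebra.ι Qc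

lemma Qc_apply (v : ConfV) : Qc v = ‖v.1‖ ^ 2 - 2 * v.2.1 * v.2.2 := rfl

lemma polar_Qc (u v : ConfV) :
    QuadraticMap.polar Qc u v = 2 * ⟪u.1, v.1⟫ - 2 * (u.2.1 * v.2.2 + u.2.2 * v.2.1) := by
  simp only [QuadraticMap.polar, Qc_apply, Prod.fst_add, Prod.snd_add, norm_add_sq_real]
  ring

lemma expand_lem {A : Type*} [Ring A] [Algebra ℝ A] (T c : A) (s : ℝ) :
    (1 - s • T) * c * (1 + s • T) =
      c + s • (c * T) - s • (T * c) - (s * s) • (T * c * T) := by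
  simp only [sub_mul, one_mul, mul_add, mul_one, smul_mul_assoc, mul_smul_comm, smul_smul,
    mul_assoc]
  module

theorem translator_versor_translates (x t : EuclideanSpace ℝ (Fin 3)) :
    (1 - (1 / 2 : ℝ) • (ιc (t, 0, 0) * ιc eInf)) * ιc (confC x) *
        (1 + (1 / 2 : ℝ) • (ιc (t, 0, 0) * ιc eInf)) =
      ιc (confC (x + t)) := by
  set a := ιc ((t, 0, 0) : ConfV) with ha
  set n := ιc eInf with hn
  set c := ιc (confC x) with hc
  have hn2 : n * n = 0 := by
    rw [hn, ιc, CliffordAlgebra.ι_sq_scalar]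
    simp [Qc_apply, eInf]
  have ha2 : a * a = (‖t‖ ^ 2) • (1 : CliffordAlgebra Qc) := by
    rw [ha, ιc, CliffordAlgebra.ι_sq_scalar, Algebra.algebraMap_eq_smul_one]
    simp [Qc_apply]
  have hna : n * a = -(a * n) := by
    have h := CliffordAlgebra.ι_mul_ι_add_swap (Q := Qc) ((t, 0, 0) : ConfV) eInf
    rw [polar_Qc] at h
    simp only [eInf, inner_zero_right] at h
    rw [show ((2:ℝ) * 0 - 2 * ((0:ℝ) * 1 + 0 * 0)) = 0 by ring, map_zero, ← ιc,
      ← ha] at h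
    exact eq_neg_of_add_eq_zero_right h
  have hnc : n * c = (-2 : ℝ) • (1 : CliffordAlgebra Qc) - c * n := by
    have h := CliffordAlgebra.ι_mul_ι_add_swap (Q := Qc) (confC x) eInf
    rw [polar_Qc] at h
    simp only [confC, eInf, inner_zero_right] at h
    rw [show ((2:ℝ) * 0 - 2 * ((1:ℝ) * 1 + ‖x‖ ^ 2 / 2 * 0)) = -2 by ring,
      Algebra.algebraMap_eq_smul_one, ← ιc, ← confC, ← hc] at h
    exact eq_sub_of_add_eq' h
  have hac : a * c = (2 * ⟪x, t⟫) • (1 : CliffordAlgebra Qc) - c * a := by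
    have h := CliffordAlgebra.ι_mul_ι_add_swap (Q := Qc) (confC x) ((t, 0, 0) : ConfV)
    rw [polar_Qc] at h
    simp only [confC] at h
    rw [show ((2:ℝ) * ⟪x, t⟫ - 2 * ((1:ℝ) * 0 + ‖x‖ ^ 2 / 2 * 0)) = 2 * ⟪x, t⟫ by ring,
      Algebra.algebraMap_eq_smul_one, ← ιc, ← confC, ← ha, ← hc] at h
    exact eq_sub_of_add_eq' h
  have hTc : a * n * c = c * (a * n) - (2 * ⟪x, t⟫) • n - (2 : ℝ) • a := by
    rw [mul_assoc, hnc, mul_sub, mul_smul_comm, mul_one, ← mul_assoc, hac, sub_mul,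
      smul_mul_assoc, one_mul, mul_assoc]
    module
  have hTcT : a * n * c * (a * n) = (-(2 * ‖t‖ ^ 2)) • n := by
    rw [hTc, sub_mul, sub_mul, smul_mul_assoc, smul_mul_assoc]
    have h1 : a * n * (a * n) = 0 := by
      rw [show a * n * (a * n) = a * (n * a) * n by noncomm_ring, hna]
      rw [show a * -(a * n) * n = -(a * a * (n * n)) by noncomm_ring, hn2]
      simp
    have h2 : n * (a * n) = 0 := by
      rw [← mul_assoc, hna]
      rw [show -(a * n) * n = -(a * (n * n)) by noncomm_ring, hn2]
      simp
    have h3 : a * (a * n) = (‖t‖ ^ 2) • n := by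
      rw [← mul_assoc, ha2, smul_mul_assoc, one_mul]
    rw [mul_assoc c (a*n) (a*n), h1, h2, h3]
    simp only [mul_zero, smul_zero, smul_smul]
    module
  have hrhs : ιc (confC (x + t)) = c + a + (⟪x, t⟫ + ‖t‖ ^ 2 / 2) • n := by
    have hv : confC (x + t) =
        confC x + ((t, 0, 0) : ConfV) + (⟪x, t⟫ + ‖t‖ ^ 2 / 2) • eInf := by
      simp only [confC, eInf, Prod.mk_add_mk, Prod.smul_mk, smul_eq_mul, Prod.mk.injEq]
      refine ⟨by simp, by ring, ?_⟩
      rw [norm_add_sq_real]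
      ring
    rw [hv, map_add, map_add, map_smul, ← ha, ← hn, ← hc]
  rw [expand_lem, hTcT, hTc, hrhs]
  match_scalars <;> ring
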